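/- For every positive integer r, every vector w ∈ ℚ^r, and every positive integer N, there exists a vector w̄ ∈ ℤ^r with ‖w̄‖_∞ ≤ 2^{4r³} · N^{r(r+2)} such that sign(w · b) = sign(w̄ · b) for all vectors b ∈ ℤ^r with ‖b‖₁ ≤ N − 1, where · denotes the standard inner product and sign(t) ∈ {−1, 0, 1} is the sign of the real number t. -/

import Mathlib

open Finset

lemma sign_add_right_of_abs_lt {α : Type*} [Ring α] [LinearOrder α] [IsStrictOrderedRing α] {x y : α}
    (h : |y| < |x|) : SignType.sign (x + y) = SignType.sign x := by
  rcases lt_trichotomy x 0 with hx | hx | hx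
  · have h' : |y| < -x := by rwa [abs_of_neg hx] at h
    have hxy : x + y < 0 := by
      calc x + y ≤ x + |y| := add_le_add_right (le_abs_self y) x
        _ < x + -x := add_lt_add_right h' x
        _ = 0 := add_neg_cancel x
    rw [sign_neg hx, sign_neg hxy]
  · subst hx; exact absurd h (by simpa using abs_nonneg y)
  · have h' : |y| < x := by rwa [abs_of_pos hx] at h
    have hxy : 0 < x + y := by
      calc (0:α) = x + -x := (add_neg_cancel x).symm
        _ < x + -|y| := add_lt_add_right (neg_lt_neg h') x
        _ ≤ x + y := add_le_add_right (neg_abs_le y) x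
    rw [sign_pos hx, sign_pos hxy]

lemma dirichlet_sim (r N : ℕ) (hN : 1 ≤ N) (w : Fin r → ℚ) :
    ∃ q : ℕ, 1 ≤ q ∧ q ≤ N ^ r ∧
      ∀ i, (N : ℚ) * |(q : ℚ) * w i - round ((q : ℚ) * w i)| ≤ 1 := by
  have hN0 : (0:ℚ) < N := by exact_mod_cast hN
  set g : Fin (N ^ r + 1) → (Fin r → Fin N) := fun q i =>
    ⟨(⌊(N : ℚ) * Int.fract ((q : ℚ) * w i)⌋).toNat, by
      have h1 : (0:ℚ) ≤ Int.fract ((q : ℚ) * w i) := Int.fract_nonneg _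
      have h2 : Int.fract ((q : ℚ) * w i) < 1 := Int.fract_lt_one _
      have : ⌊(N : ℚ) * Int.fract ((q : ℚ) * w i)⌋ < (N:ℤ) := by
        apply Int.floor_lt.2
        push_cast
        nlinarith
      omega⟩ with hg
  have hcard : Fintype.card (Fin r → Fin N) < Fintype.card (Fin (N ^ r + 1)) := by
    simp
  obtain ⟨a, b, hab, heq⟩ := Fintype.exists_ne_map_eq_of_card_lt g hcard
  wlog hlt : (a : ℕ) < (b : ℕ) generalizing a b
  · exact this b a hab.symm heq.symm (by omega)
  refine ⟨(b : ℕ) - (a : ℕ), by omega, by omega, fun i => ?_⟩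
  have hfl : ⌊(N : ℚ) * Int.fract ((b : ℚ) * w i)⌋ = ⌊(N : ℚ) * Int.fract ((a : ℚ) * w i)⌋ := by
    have := congrFun heq i
    rw [hg] at this
    simp only [Fin.mk.injEq] at this
    have hb0 : 0 ≤ ⌊(N : ℚ) * Int.fract ((b : ℚ) * w i)⌋ :=
      Int.floor_nonneg.2 (mul_nonneg hN0.le (Int.fract_nonneg _))
    have ha0 : 0 ≤ ⌊(N : ℚ) * Int.fract ((a : ℚ) * w i)⌋ :=
      Int.floor_nonneg.2 (mul_nonneg hN0.le (Int.fract_nonneg _))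
    omega
  set x : ℚ := (((b : ℕ) - (a : ℕ) : ℕ) : ℚ) * w i with hxdef
  have hxe : x = (b : ℚ) * w i - (a : ℚ) * w i := by
    rw [hxdef, Nat.cast_sub hlt.le]
    ring
  set z : ℤ := ⌊(b : ℚ) * w i⌋ - ⌊(a : ℚ) * w i⌋ with hz
  have hdist : (N : ℚ) * |x - (z : ℚ)| < 1 := by
    have hfb := Int.floor_le ((N : ℚ) * Int.fract ((b : ℚ) * w i))
    have hfb' := Int.lt_floor_add_one ((N : ℚ) * Int.fract ((b : ℚ) * w i))
    have hfa := Int.floor_le ((N : ℚ) * Int.fract ((a : ℚ) * w i))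
    have hfa' := Int.lt_floor_add_one ((N : ℚ) * Int.fract ((a : ℚ) * w i))
    rw [hfl] at hfb hfb'
    have h1 : x - (z : ℚ) = Int.fract ((b : ℚ) * w i) - Int.fract ((a : ℚ) * w i) := by
      rw [hxe, hz]
      unfold Int.fract
      push_cast
      ring
    have h2 : (N:ℚ) * |x - (z:ℚ)| = |(N:ℚ) * Int.fract ((b : ℚ) * w i)
        - (N:ℚ) * Int.fract ((a : ℚ) * w i)| := by
      rw [h1, ← abs_of_pos hN0, ← abs_mul, abs_of_pos hN0]
      ring_nf
    rw [h2, abs_lt]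
    constructor <;> linarith
  have hr := round_le x z
  calc (N : ℚ) * |x - round x| ≤ (N : ℚ) * |x - (z : ℚ)| :=
        mul_le_mul_of_nonneg_left hr hN0.le
    _ ≤ 1 := hdist.le

lemma ft_key (r N : ℕ) (hN : 1 ≤ N) :
    ∀ k : ℕ, ∀ w : Fin r → ℚ, (univ.filter fun i => w i ≠ 0).card ≤ k →
    ∃ wbar : Fin r → ℤ,
      (∀ i, |wbar i| ≤ 3 ^ k * (N : ℤ) ^ ((r + 1) * k) - 1) ∧
      ∀ b : Fin r → ℤ, (∑ i, |b i|) ≤ (N : ℤ) - 1 →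
        SignType.sign (∑ i, w i * (b i : ℚ)) = SignType.sign (∑ i, wbar i * b i) := by
  have hNZ : (1:ℤ) ≤ (N:ℤ) := by exact_mod_cast hN
  have hP : (1:ℤ) ≤ (N:ℤ) ^ r := one_le_pow₀ hNZ
  intro k
  induction k with
  | zero =>
    intro w hw
    refine ⟨0, by simp, fun b hb => ?_⟩
    have hw0 : ∀ i, w i = 0 := by
      intro i; by_contra hne
      have hm : i ∈ univ.filter fun i => w i ≠ 0 := by simp [hne]
      have := card_pos.2 ⟨i, hm⟩; omega
    simp [hw0]
  | succ k ih =>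
    intro w hw
    have hA : (1:ℤ) ≤ 3 ^ k * (N : ℤ) ^ ((r + 1) * k) :=
      one_le_mul_of_one_le_of_one_le (one_le_pow₀ (by norm_num)) (one_le_pow₀ hNZ)
    have hA1 : (1:ℤ) ≤ 3 ^ (k+1) * (N : ℤ) ^ ((r + 1) * (k+1)) :=
      one_le_mul_of_one_le_of_one_le (one_le_pow₀ (by norm_num)) (one_le_pow₀ hNZ)
    by_cases hz : ∀ i, w i = 0
    · exact ⟨0, fun i => by simpa using by linarith, fun b hb => by simp [hz]⟩
    push_neg at hz
    obtain ⟨j, hj⟩ := hz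
    obtain ⟨i₀, -, hi₀⟩ := Finset.exists_max_image univ (fun i => |w i|) ⟨j, mem_univ j⟩
    set c : ℚ := |w i₀| with hc_def
    have hc : 0 < c := lt_of_lt_of_le (abs_pos.2 hj) (hi₀ j (mem_univ j))
    have hwi₀ : w i₀ ≠ 0 := by
      intro h0; rw [hc_def, h0] at hc; simp at hc
    set v : Fin r → ℚ := fun i => w i / c with hv_def
    have hwv : ∀ i, w i = c * v i := fun i => by
      rw [hv_def]; field_simp
    have hvle : ∀ i, |v i| ≤ 1 := by
      intro i
      rw [hv_def]
      simp only [abs_div, hc_def, abs_abs]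
      rw [div_le_one hc]
      exact hi₀ i (mem_univ i)
    have hvi₀ : v i₀ = 1 ∨ v i₀ = -1 := by
      rcases lt_or_gt_of_ne hwi₀ with h | h
      · right; rw [hv_def]; simp only [hc_def, abs_of_neg h]; field_simp
      · left; rw [hv_def]; simp only [hc_def, abs_of_pos h]; field_simp
    obtain ⟨q, hq1, hq2, hq3⟩ := dirichlet_sim r N hN v
    have hqQ : (0:ℚ) < q := by exact_mod_cast hq1
    set u : Fin r → ℤ := fun i => round ((q:ℚ) * v i) with hu_def
    set w' : Fin r → ℚ := fun i => (q:ℚ) * v i - (u i : ℚ) with hw'_def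
    have hw'i₀ : w' i₀ = 0 := by
      rcases hvi₀ with h | h
      · have hqv : (q:ℚ) * v i₀ = (((q:ℤ)) : ℚ) := by rw [h]; push_cast; ring
        have hui : u i₀ = (q:ℤ) := by
          show round ((q:ℚ) * v i₀) = (q:ℤ)
          rw [hqv, round_intCast]
        show (q:ℚ) * v i₀ - (u i₀ : ℚ) = 0
        rw [hqv, hui]; exact sub_self _
      · have hqv : (q:ℚ) * v i₀ = (Int.cast (-(q:ℤ)) : ℚ) := by rw [h]; push_cast; ring
        have hui : u i₀ = -(q:ℤ) := by
          show round ((q:ℚ) * v i₀) = -(q:ℤ)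
          rw [hqv, round_intCast]
        show (q:ℚ) * v i₀ - (u i₀ : ℚ) = 0
        rw [hqv, hui]; exact sub_self _
    have hw'z : ∀ i, w i = 0 → w' i = 0 := by
      intro i h0
      have hv0 : v i = 0 := by rw [hv_def]; simp [h0]
      simp [hw'_def, hu_def, hv0]
    have hcard' : (univ.filter fun i => w' i ≠ 0).card ≤ k := by
      have hsub : (univ.filter fun i => w' i ≠ 0) ⊆ (univ.filter fun i => w i ≠ 0).erase i₀ := by
        intro i hi
        simp only [mem_filter, mem_univ, true_and] at hi
        rw [mem_erase]
        constructor
        · rintro rfl; exact hi hw'i₀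
        · simp only [mem_filter, mem_univ, true_and]
          exact fun h0 => hi (hw'z i h0)
      have h1 := card_le_card hsub
      have h2 : i₀ ∈ univ.filter fun i => w i ≠ 0 := by simp [hwi₀]
      have h3 := card_erase_of_mem h2
      have h4 := card_pos.2 ⟨i₀, h2⟩
      omega
    obtain ⟨wb', hb', hs'⟩ := ih w' hcard'
    set A : ℤ := 3 ^ k * (N : ℤ) ^ ((r + 1) * k) with hA_def
    set K : ℤ := (N:ℤ) * (A - 1) + 1 with hK_def
    have hK : 0 < K := by rw [hK_def]; nlinarith
    have hu_bound : ∀ i, |u i| ≤ (N:ℤ)^r := by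
      intro i
      have h1 : |(q:ℚ) * v i| ≤ (q:ℚ) := by
        rw [abs_mul, abs_of_pos hqQ]
        nlinarith [hvle i, abs_nonneg (v i)]
      have h2 : |(q:ℚ) * v i - (u i:ℚ)| ≤ 1/2 := by
        rw [hu_def]; exact abs_sub_round _
      have h3 : |(u i:ℚ)| ≤ (q:ℚ) + 1/2 := by
        have := abs_sub_abs_le_abs_sub ((u i:ℚ)) ((q:ℚ) * v i)
        rw [abs_sub_comm] at this
        linarith
      have h4 : ((|u i| : ℤ) : ℚ) < (((N:ℤ)^r + 1 : ℤ) : ℚ) := by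
        push_cast
        have hq2' : (q:ℚ) ≤ (N:ℚ)^r := by exact_mod_cast hq2
        linarith
      have h5 : |u i| < (N:ℤ)^r + 1 := by exact_mod_cast h4
      omega
    refine ⟨fun i => K * u i + wb' i, fun i => ?_, fun b hb => ?_⟩
    · have h1 : |K * u i + wb' i| ≤ K * (N:ℤ)^r + (A - 1) := by
        calc |K * u i + wb' i| ≤ |K * u i| + |wb' i| := abs_add_le _ _
          _ ≤ K * (N:ℤ)^r + (A - 1) := by
            rw [abs_mul, abs_of_pos hK]
            exact add_le_add (mul_le_mul_of_nonneg_left (hu_bound i) hK.le) (hb' i)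
      have hpow : (N:ℤ)^((r+1)*(k+1)) = (N:ℤ)^((r+1)*k) * ((N:ℤ)^r * (N:ℤ)) := by
        rw [show (r+1)*(k+1) = (r+1)*k + (r + 1) by ring, pow_add, pow_add, pow_one]
      have hAP : A ≤ A * (N:ℤ)^r := le_mul_of_one_le_right (by linarith) hP
      have hAPN : A * (N:ℤ)^r ≤ A * (N:ℤ)^r * (N:ℤ) :=
        le_mul_of_one_le_right (by nlinarith) hNZ
      have hPN : (N:ℤ)^r ≤ (N:ℤ)^r * (N:ℤ) := le_mul_of_one_le_right (by linarith) hNZ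
      have hPAN : (N:ℤ)^r * (N:ℤ) ≤ A * ((N:ℤ)^r * (N:ℤ)) :=
        le_mul_of_one_le_left (by nlinarith) hA
      calc |K * u i + wb' i| ≤ K * (N:ℤ)^r + (A - 1) := h1
        _ ≤ 3 * A * ((N:ℤ)^r * (N:ℤ)) - 1 := by rw [hK_def]; nlinarith
        _ = 3 ^ (k+1) * (N:ℤ)^((r+1)*(k+1)) - 1 := by
            rw [hpow, pow_succ, hA_def]; ring
    · -- sign equality
      set T : ℚ := ∑ i, v i * (b i:ℚ) with hT_def
      set U : ℤ := ∑ i, u i * b i with hU_def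
      set W' : ℚ := ∑ i, w' i * (b i:ℚ) with hW'_def
      set B' : ℤ := ∑ i, wb' i * b i with hB'_def
      have e0 : (∑ i, w i * (b i:ℚ)) = c * T := by
        rw [hT_def, mul_sum]
        exact sum_congr rfl fun i _ => by rw [hwv i]; ring
      have e2 : (q:ℚ) * T = (U:ℚ) + W' := by
        rw [hT_def, hW'_def, hU_def, mul_sum]
        push_cast
        rw [← sum_add_distrib]
        exact sum_congr rfl fun i _ => by rw [hw'_def]; ring
      have e3 : (∑ i, (K * u i + wb' i) * b i) = K * U + B' := by
        rw [hU_def, hB'_def, mul_sum, ← sum_add_distrib]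
        exact sum_congr rfl fun i _ => by ring
      have hbQ : (∑ i, |(b i:ℚ)|) ≤ (N:ℚ) - 1 := by
        have : ((∑ i, |b i| : ℤ) : ℚ) ≤ (((N:ℤ) - 1 : ℤ) : ℚ) := by exact_mod_cast hb
        push_cast at this
        convert this using 2
      have hW'lt : |W'| < 1 := by
        have h1 : (N:ℚ) * |W'| ≤ (N:ℚ) - 1 := by
          calc (N:ℚ) * |W'| ≤ (N:ℚ) * ∑ i, |w' i * (b i:ℚ)| := by
                have := abs_sum_le_sum_abs (fun i => w' i * (b i:ℚ)) univ
                have hN0 : (0:ℚ) ≤ N := by positivity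
                rw [hW'_def]
                exact mul_le_mul_of_nonneg_left this hN0
            _ = ∑ i, ((N:ℚ) * |w' i|) * |(b i:ℚ)| := by
                rw [mul_sum]; exact sum_congr rfl fun i _ => by rw [abs_mul]; ring
            _ ≤ ∑ i, 1 * |(b i:ℚ)| := by
                apply sum_le_sum
                intro i _
                exact mul_le_mul_of_nonneg_right (hq3 i) (abs_nonneg _)
            _ = ∑ i, |(b i:ℚ)| := by simp
            _ ≤ (N:ℚ) - 1 := hbQ
        have hN0 : (0:ℚ) < N := by exact_mod_cast hN
        have h2 : (N:ℚ) * |W'| < (N:ℚ) * 1 := by rw [mul_one]; linarith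
        exact lt_of_mul_lt_mul_left h2 hN0.le
      have hB'le : |B'| < K := by
        have h1 : |B'| ≤ (A - 1) * ∑ i, |b i| := by
          calc |B'| ≤ ∑ i, |wb' i * b i| := by
                rw [hB'_def]; exact abs_sum_le_sum_abs _ _
            _ ≤ ∑ i, (A - 1) * |b i| := by
                apply sum_le_sum
                intro i _
                rw [abs_mul]
                exact mul_le_mul_of_nonneg_right (hb' i) (abs_nonneg _)
            _ = (A - 1) * ∑ i, |b i| := by rw [mul_sum]
        have h2 : (A - 1) * ∑ i, |b i| ≤ (A - 1) * ((N:ℤ) - 1) :=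
          mul_le_mul_of_nonneg_left hb (by linarith)
        have h3 : (A - 1) * ((N:ℤ) - 1) = (N:ℤ) * (A - 1) - (A - 1) := by ring
        rw [hK_def]
        linarith
      rw [e0, e3, sign_mul, sign_pos hc, one_mul]
      have eq1 : SignType.sign T = SignType.sign ((q:ℚ) * T) := by
        rw [sign_mul, sign_pos hqQ, one_mul]
      rw [eq1, e2]
      by_cases hU0 : U = 0
      · rw [hU0]
        simp only [Int.cast_zero, zero_add, mul_zero]
        have hres := hs' b hb
        rw [hW'_def, hB'_def]
        exact hres
      · have hU1 : (1:ℤ) ≤ |U| := Int.one_le_abs (by omega)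
        have hUQ : |W'| < |(U:ℚ)| := by
          have h9 : (1:ℚ) ≤ |(U:ℚ)| := by exact_mod_cast hU1
          linarith
        rw [sign_add_right_of_abs_lt hUQ, sign_intCast]
        have hKU : |B'| < |K * U| := by
          rw [abs_mul, abs_of_pos hK]
          calc |B'| < K := hB'le
            _ ≤ K * |U| := le_mul_of_one_le_right hK.le hU1
        rw [sign_add_right_of_abs_lt hKU, sign_mul, sign_pos hK, one_mul]

/-- Frank–Tardos: for every `w ∈ ℚ^r` and positive integer `N` there is
`w̄ ∈ ℤ^r` with `‖w̄‖_∞ ≤ 2^{4r³} N^{r(r+2)}` such that `sign(w · b) = sign(w̄ · b)` for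
every `b ∈ ℤ^r` with `‖b‖₁ ≤ N - 1`. -/
theorem stmt14 (r : ℕ) (hr : 1 ≤ r) (w : Fin r → ℚ) (N : ℕ) (hN : 1 ≤ N) :
    ∃ wbar : Fin r → ℤ,
      (∀ i, |wbar i| ≤ 2 ^ (4 * r ^ 3) * (N : ℤ) ^ (r * (r + 2))) ∧
      ∀ b : Fin r → ℤ, (∑ i, |b i|) ≤ (N : ℤ) - 1 →
        SignType.sign (∑ i, w i * (b i : ℚ)) = SignType.sign (∑ i, wbar i * b i) := by
  obtain ⟨wbar, h1, h2⟩ := ft_key r N hN r w (le_trans (card_filter_le _ _) (by simp))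
  refine ⟨wbar, fun i => ?_, h2⟩
  have hNZ : (1:ℤ) ≤ (N:ℤ) := by exact_mod_cast hN
  have ha : (3:ℤ)^r ≤ 2^(4*r^3) := by
    calc (3:ℤ)^r ≤ 4^r := pow_le_pow_left₀ (by norm_num) (by norm_num) r
      _ = 2^(2*r) := by rw [show (4:ℤ) = 2^2 by norm_num, ← pow_mul]
      _ ≤ 2^(4*r^3) := by
          apply pow_le_pow_right₀ (by norm_num)
          have hr3 : r ≤ r^3 := Nat.le_self_pow (by norm_num) r
          omega
  have hbp : (N:ℤ)^((r+1)*r) ≤ (N:ℤ)^(r*(r+2)) := by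
    apply pow_le_pow_right₀ hNZ
    nlinarith
  have h3 := h1 i
  have hm : (3:ℤ)^r * (N:ℤ)^((r+1)*r) ≤ 2^(4*r^3) * (N:ℤ)^(r*(r+2)) :=
    mul_le_mul ha hbp (by positivity) (by positivity)
  linarith
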